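/- Let ζ be a stochastic process on a probability space (Ω, ℱ, P) indexed by [0,1] such that ζ(·,t) is measurable for each t ∈ [0,1], the sample path ζ(ω,·) is continuous for each ω ∈ Ω, ζ is a Gaussian process (every finite real linear combination Σᵢ cᵢ ζ(·,tᵢ) has a possibly degenerate Gaussian distribution on ℝ), and the map ω ↦ ζ(ω,·) is measurable into C([0,1],ℝ). Then for every finite signed Borel measure η on [0,1], the real random variable ω ↦ ∫_{[0,1]} ζ(ω,t) dη(t) has a (possibly degenerate) Gaussian distribution. -/

import Mathlib

open MeasureTheory ProbabilityTheory
open scoped NNReal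

noncomputable instance : MeasurableSpace C(Set.Icc (0:ℝ) 1, ℝ) := borel _
instance : BorelSpace C(Set.Icc (0:ℝ) 1, ℝ) := ⟨rfl⟩

/-- Integral of a function with respect to a finite signed Borel measure on `[0,1]`,
defined via the Jordan decomposition `η = η⁺ - η⁻`. -/
noncomputable def sintegral (η : SignedMeasure (Set.Icc (0:ℝ) 1))
    (x : Set.Icc (0:ℝ) 1 → ℝ) : ℝ :=
  (∫ t, x t ∂η.toJordanDecomposition.posPart) -
    ∫ t, x t ∂η.toJordanDecomposition.negPart


namespace GaussAux
open Filter Set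
open scoped ENNReal Topology

noncomputable def γ : Measure ℝ := gaussianReal 0 1

instance : IsProbabilityMeasure γ := by unfold γ; infer_instance

lemma gaussianPDFReal_le_one (x : ℝ) : gaussianPDFReal 0 1 x ≤ 1 := by
  rw [gaussianPDFReal]
  have h1 : Real.exp (-(x - 0) ^ 2 / (2 * (1:ℝ≥0))) ≤ 1 := by
    rw [Real.exp_le_one_iff]
    apply div_nonpos_of_nonpos_of_nonneg
    · simpa using sq_nonneg (x-0)
    · norm_num
  have h2 : (Real.sqrt (2 * Real.pi * (1:ℝ≥0)))⁻¹ ≤ 1 := by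
    rw [inv_le_one_iff₀]
    right
    rw [show (2 * Real.pi * ((1:ℝ≥0):ℝ)) = 2 * Real.pi by norm_num]
    nlinarith [Real.sqrt_le_sqrt (show (1:ℝ) ≤ 2 * Real.pi by nlinarith [Real.pi_gt_three]),
      Real.sqrt_one]
  calc (Real.sqrt (2 * Real.pi * (1:ℝ≥0)))⁻¹ * Real.exp (-(x - 0) ^ 2 / (2 * (1:ℝ≥0)))
      ≤ 1 * 1 := by
        apply mul_le_mul h2 h1 (Real.exp_nonneg _)
        norm_num
    _ = 1 := by norm_num

lemma γ_le_volume : γ ≤ (volume : Measure ℝ) := by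
  unfold γ
  rw [gaussianReal_of_var_ne_zero _ one_ne_zero]
  have : (volume : Measure ℝ) = volume.withDensity 1 := (withDensity_one).symm
  nth_rewrite 2 [this]
  apply withDensity_mono
  filter_upwards with x
  simp only [gaussianPDF, Pi.one_apply]
  exact ENNReal.ofReal_le_one.mpr (gaussianPDFReal_le_one x)

lemma γ_noAtoms : ∀ x : ℝ, γ {x} = 0 := by
  intro x
  refine le_antisymm ?_ zero_le
  calc γ {x} ≤ volume {x} := γ_le_volume _
    _ = 0 := Real.volume_singleton

/-- Representation: `gaussianReal m (s^2) = map (fun z => m + s * z) γ` for `s : ℝ≥0`. -/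
lemma gauss_rep (m : ℝ) (s : ℝ≥0) :
    Measure.map (fun z : ℝ => m + (s:ℝ) * z) γ = gaussianReal m (s ^ 2) := by
  have h1 : Measure.map (fun z : ℝ => (s:ℝ) * z) γ = gaussianReal 0 (s^2) := by
    unfold γ
    rw [show (fun z : ℝ => (s:ℝ) * z) = ((s:ℝ) * ·) by rfl, gaussianReal_map_const_mul]
    congr 1
    · ring
    · ext
      simp [pow_two]
  have h2 : (fun z : ℝ => m + (s:ℝ) * z) = (fun y : ℝ => m + y) ∘ (fun z : ℝ => (s:ℝ) * z) := rfl
  rw [h2, ← Measure.map_map (by fun_prop) (by fun_prop), h1,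
    show (fun y : ℝ => m + y) = (m + ·) by rfl, gaussianReal_map_const_add]
  rw [zero_add]

lemma gauss_eval (m : ℝ) (s : ℝ≥0) {S : Set ℝ} (hS : MeasurableSet S) :
    gaussianReal m (s ^ 2) S = γ ((fun z : ℝ => m + (s:ℝ) * z) ⁻¹' S) := by
  rw [← gauss_rep, Measure.map_apply (by fun_prop) hS]


/-- generic: measure of a set as an integral of an indicator -/
lemma meas_toReal_eq_integral {α : Type*} [MeasurableSpace α] (μ : Measure α)
    {S : Set α} (hS : MeasurableSet S) :
    (μ S).toReal = ∫ a, S.indicator (fun _ => (1:ℝ)) a ∂μ := by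
  rw [integral_indicator_const (1:ℝ) hS, smul_eq_mul, mul_one]
  rfl

/-- generic DCT for indicators of sets -/
lemma tendsto_meas_of_indicator {α : Type*} [MeasurableSpace α] (μ : Measure α)
    [IsProbabilityMeasure μ] (S : ℕ → Set α) (T : Set α)
    (hS : ∀ n, MeasurableSet (S n)) (hT : MeasurableSet T)
    (h : ∀ᵐ a ∂μ, Tendsto (fun n => (S n).indicator (fun _ => (1:ℝ)) a) atTop
      (𝓝 (T.indicator (fun _ => (1:ℝ)) a))) :
    Tendsto (fun n => (μ (S n)).toReal) atTop (𝓝 ((μ T).toReal)) := by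
  simp_rw [meas_toReal_eq_integral μ (hS _), meas_toReal_eq_integral μ hT]
  refine tendsto_integral_of_dominated_convergence (fun _ => (1:ℝ))
    (fun n => ((measurable_const.indicator (hS n)).aestronglyMeasurable)) (integrable_const 1)
    (fun n => ?_) h
  filter_upwards with a
  classical
  by_cases ha : a ∈ S n <;> simp [Set.indicator_apply, ha]

lemma indicator_tendsto_of_ne {u : ℕ → ℝ} {l x : ℝ} (hu : Tendsto u atTop (𝓝 l)) (hl : l ≠ x) :
    Tendsto (fun n => (Iic x).indicator (fun _ => (1:ℝ)) (u n)) atTop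
      (𝓝 ((Iic x).indicator (fun _ => (1:ℝ)) l)) := by
  rcases lt_or_gt_of_ne hl with h | h
  · have hev : ∀ᶠ n in atTop, (Iic x).indicator (fun _ => (1:ℝ)) (u n) = 1 := by
      filter_upwards [hu.eventually_lt_const h] with n hn
      simp [Set.indicator_apply, hn.le]
    have h1 : (Iic x).indicator (fun _ => (1:ℝ)) l = 1 := by simp [Set.indicator_apply, h.le]
    rw [h1]
    exact Tendsto.congr' (by filter_upwards [hev] with n hn using hn.symm) tendsto_const_nhds
  · have hev : ∀ᶠ n in atTop, (Iic x).indicator (fun _ => (1:ℝ)) (u n) = 0 := by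
      filter_upwards [hu.eventually_const_lt h] with n hn
      simp [Set.indicator_apply, not_le.mpr hn]
    have h1 : (Iic x).indicator (fun _ => (1:ℝ)) l = 0 := by
      simp [Set.indicator_apply, not_le.mpr h]
    rw [h1]
    exact Tendsto.congr' (by filter_upwards [hev] with n hn using hn.symm) tendsto_const_nhds

/-- CDF of gaussians converges when parameters converge (at admissible points). -/
lemma tendsto_gauss_cdf (m : ℕ → ℝ) (s : ℕ → ℝ≥0) (m₀ : ℝ) (s₀ : ℝ≥0)
    (hm : Tendsto m atTop (𝓝 m₀)) (hs : Tendsto (fun n => (s n : ℝ)) atTop (𝓝 (s₀:ℝ)))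
    (x : ℝ) (hx : s₀ ≠ 0 ∨ x ≠ m₀) :
    Tendsto (fun n => (gaussianReal (m n) ((s n)^2) (Iic x)).toReal) atTop
      (𝓝 ((gaussianReal m₀ (s₀^2) (Iic x)).toReal)) := by
  simp_rw [gauss_eval _ _ measurableSet_Iic]
  apply tendsto_meas_of_indicator γ _ _
    (fun n => measurableSet_Iic.preimage (by fun_prop))
    (measurableSet_Iic.preimage (by fun_prop))
  have hnull : ∀ᵐ z ∂γ, m₀ + (s₀:ℝ) * z ≠ x := by
    rcases eq_or_ne s₀ 0 with h0 | h0
    · filter_upwards with z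
      rcases hx with h | h
      · exact absurd h0 h
      · simp [h0, Ne.symm h]
    · have : {z : ℝ | m₀ + (s₀:ℝ) * z = x} = {(x - m₀) / (s₀:ℝ)} := by
        ext z
        simp only [mem_setOf_eq, mem_singleton_iff]
        rw [eq_div_iff (by exact_mod_cast h0)]
        constructor <;> intro h <;> nlinarith [h]
      rw [ae_iff]
      simpa [this] using γ_noAtoms ((x - m₀) / (s₀:ℝ))
  filter_upwards [hnull] with z hz
  have hconv : Tendsto (fun n => m n + (s n : ℝ) * z) atTop (𝓝 (m₀ + (s₀:ℝ) * z)) :=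
    hm.add (hs.mul_const z)
  exact indicator_tendsto_of_ne hconv hz

/-- CDF of `Y` is the limit of CDFs of `X n` at non-atoms, given a.e. convergence. -/
lemma tendsto_cdf_of_ae {Ω : Type*} [MeasurableSpace Ω] (P : Measure Ω) [IsProbabilityMeasure P]
    (X : ℕ → Ω → ℝ) (Y : Ω → ℝ) (hXm : ∀ n, Measurable (X n)) (hYm : Measurable Y)
    (hae : ∀ᵐ ω ∂P, Tendsto (fun n => X n ω) atTop (𝓝 (Y ω)))
    (x : ℝ) (hx : P {ω | Y ω = x} = 0) :
    Tendsto (fun n => (P (X n ⁻¹' Iic x)).toReal) atTop (𝓝 ((P (Y ⁻¹' Iic x)).toReal)) := by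
  apply tendsto_meas_of_indicator P _ _
    (fun n => measurableSet_Iic.preimage (hXm n)) (measurableSet_Iic.preimage hYm)
  have hnull : ∀ᵐ ω ∂P, Y ω ≠ x := by
    rw [ae_iff]
    simpa using hx
  filter_upwards [hae, hnull] with ω hω hne
  exact indicator_tendsto_of_ne hω hne

/-- two finite measures agreeing on `Iic x` off a countable set agree. -/
lemma key_tendsto (x : ℝ) (ρ : Measure ℝ) [IsFiniteMeasure ρ]
    (y : ℕ → ℝ) (hy : ∀ j : ℕ, y j ∈ Ioo x (x + 1/(j+1))) :
    Tendsto (fun j => ρ (Iic (y j))) atTop (𝓝 (ρ (Iic x))) := by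
  have hdecomp : ∀ j, ρ (Iic (y j)) = ρ (Iic x) + ρ (Ioc x (y j)) := by
    intro j
    rw [← measure_union (Iic_disjoint_Ioc le_rfl) measurableSet_Ioc,
      Iic_union_Ioc_eq_Iic (hy j).1.le]
  simp_rw [hdecomp]
  have hto0 : Tendsto (fun j : ℕ => ρ (Ioc x (x + 1/(j+1)))) atTop (𝓝 0) := by
    have hiInter : ⋂ j : ℕ, Ioc x (x + 1/(j+1)) = ∅ := by
      ext t
      simp only [mem_iInter, mem_Ioc, mem_empty_iff_false, iff_false, not_forall]
      by_cases htx : x < t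
      · obtain ⟨j, hj⟩ := exists_nat_one_div_lt (sub_pos.mpr htx)
        exact ⟨j, fun hc => absurd hc.2 (by push_cast at hj ⊢ <;> linarith)⟩
      · exact ⟨0, fun hc => htx hc.1⟩
    have := tendsto_measure_iInter_atTop (μ := ρ) (s := fun j : ℕ => Ioc x (x + 1/(j+1)))
      (fun j : ℕ => (measurableSet_Ioc).nullMeasurableSet)
      (fun i j hij => Ioc_subset_Ioc le_rfl (by
        have hc : (i:ℝ) ≤ (j:ℝ) := Nat.cast_le.mpr hij
        have h1 : (0:ℝ) < (i:ℝ) + 1 := by positivity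
        have h2 := one_div_le_one_div_of_le h1 (by linarith : (i:ℝ)+1 ≤ (j:ℝ)+1)
        linarith))
      ⟨0, measure_ne_top _ _⟩
    rwa [hiInter, measure_empty] at this
  have hsq : Tendsto (fun j => ρ (Ioc x (y j))) atTop (𝓝 0) := by
    apply tendsto_of_tendsto_of_tendsto_of_le_of_le tendsto_const_nhds hto0
      (fun j => zero_le)
      (fun j => measure_mono (Ioc_subset_Ioc le_rfl (hy j).2.le))
  simpa using tendsto_const_nhds.add hsq

/-- two finite measures agreeing on `Iic x` off a countable set agree. -/
lemma ext_of_Iic_ae (μ ν : Measure ℝ) [IsFiniteMeasure μ] [IsFiniteMeasure ν]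
    {B : Set ℝ} (hB : B.Countable) (h : ∀ x ∉ B, μ (Iic x) = ν (Iic x)) : μ = ν := by
  refine Measure.ext_of_Iic μ ν (fun x => ?_)
  have hexists : ∀ j : ℕ, ∃ z : ℝ, z ∈ Ioo x (x + 1/(j+1)) ∧ z ∉ B := by
    intro j
    by_contra hc
    push_neg at hc
    have hsub : Ioo x (x + 1/(j+1)) ⊆ B := fun z hz => hc z hz
    have : volume (Ioo x (x + 1/(j+1))) = 0 :=
      measure_mono_null hsub (hB.measure_zero volume)
    rw [Real.volume_Ioo] at this
    simp only [ENNReal.ofReal_eq_zero] at this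
    have h2 : (0:ℝ) < x + 1/((j:ℝ)+1) - x := by
      have : (0:ℝ) < 1/((j:ℝ)+1) := by positivity
      linarith
    linarith
  choose y hy1 hy2 using hexists
  exact tendsto_nhds_unique (key_tendsto x μ y hy1)
    ((key_tendsto x ν y hy1).congr (fun j => (h (y j) (hy2 j)).symm))


/-- An a.e. limit of Gaussian random variables is Gaussian. -/
lemma gaussian_limit {Ω : Type*} [MeasurableSpace Ω] (P : Measure Ω) [IsProbabilityMeasure P]
    (X : ℕ → Ω → ℝ) (Y : Ω → ℝ) (hXm : ∀ n, Measurable (X n)) (hYm : Measurable Y)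
    (hae : ∀ᵐ ω ∂P, Tendsto (fun n => X n ω) atTop (𝓝 (Y ω)))
    (m : ℕ → ℝ) (v : ℕ → ℝ≥0) (hg : ∀ n, P.map (X n) = gaussianReal (m n) (v n)) :
    ∃ (m₀ : ℝ) (v₀ : ℝ≥0), P.map Y = gaussianReal m₀ v₀ := by
  classical
  set s : ℕ → ℝ≥0 := fun n => NNReal.sqrt (v n) with hs_def
  have hv : ∀ n, v n = (s n)^2 := fun n => (NNReal.sq_sqrt (v n)).symm
  -- law evaluation
  have hlaw : ∀ (n : ℕ) (S : Set ℝ), MeasurableSet S →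
      P (X n ⁻¹' S) = γ ((fun z : ℝ => m n + (s n : ℝ) * z) ⁻¹' S) := by
    intro n S hS
    rw [← Measure.map_apply (hXm n) hS, hg n, hv n, gauss_eval _ _ hS]
  -- step M
  obtain ⟨M, hM1, hM⟩ : ∃ M : ℝ, 1 ≤ M ∧ ENNReal.ofReal 0.9 ≤ P {ω | |Y ω| ≤ M} := by
    have hmono : Monotone (fun k : ℕ => {ω | |Y ω| ≤ (k:ℝ)}) := by
      intro i j hij ω hω
      simp only [mem_setOf_eq] at *
      exact le_trans hω (Nat.cast_le.mpr hij)
    have hunion : ⋃ k : ℕ, {ω | |Y ω| ≤ (k:ℝ)} = univ := by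
      ext ω
      simp only [mem_iUnion, mem_setOf_eq, mem_univ, iff_true]
      obtain ⟨k, hk⟩ := exists_nat_ge |Y ω|
      exact ⟨k, hk⟩
    have htend := tendsto_measure_iUnion_atTop (μ := P) hmono
    rw [hunion] at htend
    have h1 : ENNReal.ofReal 0.9 < P univ := by
      rw [measure_univ]
      rw [show (1:ℝ≥0∞) = ENNReal.ofReal 1 by simp]
      rw [ENNReal.ofReal_lt_ofReal_iff] <;> norm_num
    obtain ⟨k, hk⟩ := (htend.eventually (eventually_ge_nhds h1)).exists
    refine ⟨max (k:ℝ) 1, le_max_right _ _, le_trans hk (measure_mono (fun ω hω => ?_))⟩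
    simp only [mem_setOf_eq] at *
    exact le_trans hω (le_max_left _ _)
  -- step N
  obtain ⟨N, hN⟩ : ∃ N : ℕ, ∀ n ≥ N, P {ω | 1 ≤ dist (X n ω) (Y ω)} ≤ ENNReal.ofReal 0.1 := by
    have htm := tendstoInMeasure_of_tendsto_ae (fun n => (hXm n).aestronglyMeasurable) hae
    have := htm 1 one_pos
    have h1 : (0:ℝ≥0∞) < ENNReal.ofReal 0.1 := by
      rw [ENNReal.ofReal_pos]; norm_num
    exact eventually_atTop.mp ((this.eventually (eventually_le_nhds h1)).mono fun n hn =>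
      le_trans (measure_mono fun ω hω => by
        simp only [mem_setOf_eq] at hω ⊢
        rw [edist_dist, ← ENNReal.ofReal_one]
        exact ENNReal.ofReal_le_ofReal hω) hn)
  -- step B
  have hB : ∀ n ≥ N, ENNReal.ofReal 0.8 ≤ P (X n ⁻¹' Icc (-(M+1)) (M+1)) := by
    intro n hn
    have hsub : {ω | |Y ω| ≤ M} \ {ω | 1 ≤ dist (X n ω) (Y ω)} ⊆
        X n ⁻¹' Icc (-(M+1)) (M+1) := by
      intro ω hω
      obtain ⟨h1, h2⟩ := hω
      simp only [mem_setOf_eq, not_le] at h1 h2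
      rw [mem_preimage, mem_Icc, ← abs_le]
      have : |X n ω - Y ω| < 1 := by rwa [Real.dist_eq] at h2
      calc |X n ω| ≤ |Y ω| + |X n ω - Y ω| := by
            have := abs_sub_abs_le_abs_sub (X n ω) (Y ω)
            linarith [abs_sub_abs_le_abs_sub (X n ω) (Y ω)]
        _ ≤ M + 1 := by linarith
    calc ENNReal.ofReal 0.8
        ≤ P {ω | |Y ω| ≤ M} - P {ω | 1 ≤ dist (X n ω) (Y ω)} := by
          apply ENNReal.le_sub_of_add_le_right (measure_ne_top _ _)
          calc ENNReal.ofReal 0.8 + P {ω | 1 ≤ dist (X n ω) (Y ω)}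
              ≤ ENNReal.ofReal 0.8 + ENNReal.ofReal 0.1 := by
                exact add_le_add le_rfl (hN n hn)
            _ = ENNReal.ofReal 0.9 := by
                rw [← ENNReal.ofReal_add (by norm_num) (by norm_num)]; norm_num
            _ ≤ P {ω | |Y ω| ≤ M} := hM
      _ ≤ P ({ω | |Y ω| ≤ M} \ {ω | 1 ≤ dist (X n ω) (Y ω)}) := le_measure_diff
      _ ≤ P (X n ⁻¹' Icc (-(M+1)) (M+1)) := measure_mono hsub
  -- σ bound
  have hC0 : (0:ℝ) < 5*(M+1)/2 := by linarith
  set C : ℝ := 5*(M+1)/2 with hC_def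
  have hsb : ∀ n ≥ N, (s n : ℝ) ≤ C := by
    intro n hn
    by_cases hs0 : (s n : ℝ) = 0
    · rw [hs0]; linarith
    have hspos : (0:ℝ) < s n := lt_of_le_of_ne (s n).coe_nonneg (Ne.symm hs0)
    have hsub : (fun z : ℝ => m n + (s n:ℝ) * z) ⁻¹' Icc (-(M+1)) (M+1) ⊆
        Icc ((-(M+1) - m n)/(s n:ℝ)) ((M+1 - m n)/(s n:ℝ)) := by
      intro z hz
      rw [mem_preimage, mem_Icc] at hz
      rw [mem_Icc]
      constructor
      · rw [div_le_iff₀ hspos]; linarith [hz.1]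
      · rw [le_div_iff₀ hspos]; linarith [hz.2]
    have hb : ENNReal.ofReal 0.8 ≤ ENNReal.ofReal (2*(M+1)/(s n:ℝ)) := by
      calc ENNReal.ofReal 0.8 ≤ P (X n ⁻¹' Icc (-(M+1)) (M+1)) := hB n hn
        _ = γ ((fun z : ℝ => m n + (s n:ℝ) * z) ⁻¹' Icc (-(M+1)) (M+1)) :=
            hlaw n _ measurableSet_Icc
        _ ≤ γ (Icc ((-(M+1) - m n)/(s n:ℝ)) ((M+1 - m n)/(s n:ℝ))) := measure_mono hsub
        _ ≤ volume (Icc ((-(M+1) - m n)/(s n:ℝ)) ((M+1 - m n)/(s n:ℝ))) := γ_le_volume _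
        _ = ENNReal.ofReal ((M+1 - m n)/(s n:ℝ) - (-(M+1) - m n)/(s n:ℝ)) := Real.volume_Icc
        _ = ENNReal.ofReal (2*(M+1)/(s n:ℝ)) := by
            congr 1
            field_simp
            ring
    have hr : (0.8:ℝ) ≤ 2*(M+1)/(s n:ℝ) := by
      by_contra hc
      push_neg at hc
      have := ENNReal.ofReal_lt_ofReal_iff (by norm_num : (0:ℝ) < 0.8) |>.mpr hc
      exact absurd hb (not_le.mpr this)
    rw [le_div_iff₀ hspos] at hr
    rw [hC_def]
    nlinarith
  -- q choice
  obtain ⟨q, hq1, hqIic, hqIci⟩ : ∃ q : ℝ, 1 ≤ q ∧ γ (Iic (-q)) ≤ ENNReal.ofReal 0.1 ∧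
      γ (Ici q) ≤ ENNReal.ofReal 0.1 := by
    have h01 : (0:ℝ≥0∞) < ENNReal.ofReal 0.1 := by rw [ENNReal.ofReal_pos]; norm_num
    have hIic : Tendsto (fun k : ℕ => γ (Iic (-(k:ℝ)))) atTop (𝓝 0) := by
      have hiInter : ⋂ k : ℕ, Iic (-(k:ℝ)) = ∅ := by
        ext t
        simp only [mem_iInter, mem_Iic, mem_empty_iff_false, iff_false, not_forall, not_le]
        obtain ⟨k, hk⟩ := exists_nat_gt (-t)
        exact ⟨k, by linarith⟩
      have := tendsto_measure_iInter_atTop (μ := γ) (s := fun k : ℕ => Iic (-(k:ℝ)))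
        (fun k => measurableSet_Iic.nullMeasurableSet)
        (fun i j hij => Iic_subset_Iic.mpr (by
          have : (i:ℝ) ≤ (j:ℝ) := Nat.cast_le.mpr hij
          linarith))
        ⟨0, measure_ne_top _ _⟩
      rwa [hiInter, measure_empty] at this
    have hIci : Tendsto (fun k : ℕ => γ (Ici (k:ℝ))) atTop (𝓝 0) := by
      have hiInter : ⋂ k : ℕ, Ici (k:ℝ) = ∅ := by
        ext t
        simp only [mem_iInter, mem_Ici, mem_empty_iff_false, iff_false, not_forall, not_le]
        obtain ⟨k, hk⟩ := exists_nat_gt t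
        exact ⟨k, hk⟩
      have := tendsto_measure_iInter_atTop (μ := γ) (s := fun k : ℕ => Ici (k:ℝ))
        (fun k => measurableSet_Ici.nullMeasurableSet)
        (fun i j hij => Ici_subset_Ici.mpr (Nat.cast_le.mpr hij))
        ⟨0, measure_ne_top _ _⟩
      rwa [hiInter, measure_empty] at this
    obtain ⟨k₁, hk₁⟩ := (hIic.eventually (eventually_le_nhds h01)).exists
    obtain ⟨k₂, hk₂⟩ := (hIci.eventually (eventually_le_nhds h01)).exists
    refine ⟨max (max (k₁:ℝ) (k₂:ℝ)) 1, le_max_right _ _, ?_, ?_⟩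
    · refine le_trans (measure_mono (Iic_subset_Iic.mpr ?_)) hk₁
      have := le_max_left (max (k₁:ℝ) (k₂:ℝ)) 1
      have := le_max_left (k₁:ℝ) (k₂:ℝ)
      linarith [le_trans (le_max_left (k₁:ℝ) (k₂:ℝ)) (le_max_left (max (k₁:ℝ) (k₂:ℝ)) 1)]
    · refine le_trans (measure_mono (Ici_subset_Ici.mpr ?_)) hk₂
      exact le_trans (le_max_right (k₁:ℝ) (k₂:ℝ)) (le_max_left _ _)
  have hq0 : (0:ℝ) < q := lt_of_lt_of_le one_pos hq1
  -- m bound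
  have hmb : ∀ n ≥ N, |m n| ≤ (M+1) + C*q := by
    intro n hn
    have hcontra : ¬ (ENNReal.ofReal 0.8 ≤ ENNReal.ofReal 0.1) := by
      rw [ENNReal.ofReal_le_ofReal_iff (by norm_num)]; norm_num
    have hsn0 : (0:ℝ) ≤ (s n : ℝ) := (s n).coe_nonneg
    have claim1 : m n ≤ M + 1 + (s n : ℝ) * q := by
      by_contra hgt
      push_neg at hgt
      have hsub : (fun z : ℝ => m n + (s n:ℝ) * z) ⁻¹' Icc (-(M+1)) (M+1) ⊆ Iic (-q) := by
        intro z hz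
        rw [mem_preimage, mem_Icc] at hz
        rw [mem_Iic]
        rcases eq_or_lt_of_le hsn0 with h0 | hpos
        · exfalso
          have hs' : (s n:ℝ) = 0 := h0.symm
          rw [hs'] at hgt
          have h2 := hz.2
          rw [hs'] at h2
          linarith
        · nlinarith [hz.2]
      have := calc ENNReal.ofReal 0.8 ≤ P (X n ⁻¹' Icc (-(M+1)) (M+1)) := hB n hn
        _ = γ ((fun z : ℝ => m n + (s n:ℝ) * z) ⁻¹' Icc (-(M+1)) (M+1)) :=
            hlaw n _ measurableSet_Icc
        _ ≤ γ (Iic (-q)) := measure_mono hsub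
        _ ≤ ENNReal.ofReal 0.1 := hqIic
      exact hcontra this
    have claim2 : -(M + 1 + (s n : ℝ) * q) ≤ m n := by
      by_contra hgt
      push_neg at hgt
      have hsub : (fun z : ℝ => m n + (s n:ℝ) * z) ⁻¹' Icc (-(M+1)) (M+1) ⊆ Ici q := by
        intro z hz
        rw [mem_preimage, mem_Icc] at hz
        rw [mem_Ici]
        rcases eq_or_lt_of_le hsn0 with h0 | hpos
        · exfalso
          have hs' : (s n:ℝ) = 0 := h0.symm
          rw [hs'] at hgt
          have h2 := hz.1
          rw [hs'] at h2
          linarith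
        · nlinarith [hz.1]
      have := calc ENNReal.ofReal 0.8 ≤ P (X n ⁻¹' Icc (-(M+1)) (M+1)) := hB n hn
        _ = γ ((fun z : ℝ => m n + (s n:ℝ) * z) ⁻¹' Icc (-(M+1)) (M+1)) :=
            hlaw n _ measurableSet_Icc
        _ ≤ γ (Ici q) := measure_mono hsub
        _ ≤ ENNReal.ofReal 0.1 := hqIci
      exact hcontra this
    rw [abs_le]
    have hsC := hsb n hn
    constructor
    · nlinarith
    · nlinarith
  -- extract convergent subsequence of (m, s) on the tail
  set K : ℝ := (M+1) + C*q with hK_def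
  have hmK : ∀ n : ℕ, m (N + n) ∈ Icc (-K) K := by
    intro n
    have := hmb (N + n) (Nat.le_add_right N n)
    rw [abs_le] at this
    exact ⟨this.1, this.2⟩
  obtain ⟨m₀, hm₀mem, φ₁, hφ₁mono, hφ₁lim⟩ :=
    tendsto_subseq_of_bounded (Metric.isBounded_Icc (-K) K) hmK
  have hsK : ∀ n : ℕ, (s (N + φ₁ n) : ℝ) ∈ Icc (0:ℝ) C := by
    intro n
    exact ⟨(s _).coe_nonneg, hsb _ (Nat.le_add_right N _)⟩
  obtain ⟨s₀, hs₀mem, φ₂, hφ₂mono, hφ₂lim⟩ :=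
    tendsto_subseq_of_bounded (Metric.isBounded_Icc (0:ℝ) C) hsK
  rw [closure_Icc] at hs₀mem
  have hs₀0 : (0:ℝ) ≤ s₀ := hs₀mem.1
  set σ₀ : ℝ≥0 := ⟨s₀, hs₀0⟩ with hσ₀_def
  set k : ℕ → ℕ := fun n => N + φ₁ (φ₂ n) with hk_def
  have hkmono : StrictMono k := fun a b hab =>
    Nat.add_lt_add_left ((hφ₁mono.comp hφ₂mono) hab) N
  have hm0 : Tendsto (fun n => m (k n)) atTop (𝓝 m₀) := by
    have : (fun n => m (k n)) = (fun n => m (N + φ₁ n)) ∘ φ₂ := rfl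
    rw [this]
    exact hφ₁lim.comp hφ₂mono.tendsto_atTop
  have hs0 : Tendsto (fun n => (s (k n) : ℝ)) atTop (𝓝 (σ₀ : ℝ)) := by
    have : (fun n => (s (k n) : ℝ)) = (fun n => (s (N + φ₁ n) : ℝ)) ∘ φ₂ := rfl
    rw [this]
    exact hφ₂lim
  -- final identification
  refine ⟨m₀, σ₀^2, ?_⟩
  haveI : IsProbabilityMeasure (P.map Y) := Measure.isProbabilityMeasure_map hYm.aemeasurable
  have hBcnt : ({x : ℝ | 0 < P {ω | Y ω = x}} ∪ {m₀}).Countable :=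
    (Measure.countable_meas_level_set_pos hYm).union (countable_singleton m₀)
  refine ext_of_Iic_ae _ _ hBcnt (fun x hx => ?_)
  simp only [mem_union, mem_setOf_eq, mem_singleton_iff, not_or, not_lt] at hx
  obtain ⟨hx0, hxm⟩ := hx
  have hx0' : P {ω | Y ω = x} = 0 := le_antisymm hx0 zero_le
  have hae' : ∀ᵐ ω ∂P, Tendsto (fun n => X (k n) ω) atTop (𝓝 (Y ω)) := by
    filter_upwards [hae] with ω hω
    exact hω.comp hkmono.tendsto_atTop
  have L1 := tendsto_cdf_of_ae P (fun n => X (k n)) Y (fun n => hXm _) hYm hae' x hx0'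
  have L2 := tendsto_gauss_cdf (fun n => m (k n)) (fun n => s (k n)) m₀ σ₀ hm0 hs0 x
    (Or.inr hxm)
  have heq : ∀ n, (P (X (k n) ⁻¹' Iic x)).toReal
      = (gaussianReal (m (k n)) ((s (k n))^2) (Iic x)).toReal := by
    intro n
    rw [hlaw (k n) _ measurableSet_Iic, gauss_eval _ _ measurableSet_Iic]
  have L1' : Tendsto (fun n => (gaussianReal (m (k n)) ((s (k n))^2) (Iic x)).toReal) atTop
      (𝓝 ((P (Y ⁻¹' Iic x)).toReal)) := L1.congr heq
  have htoReal : (P (Y ⁻¹' Iic x)).toReal = (gaussianReal m₀ (σ₀^2) (Iic x)).toReal :=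
    tendsto_nhds_unique L1' L2
  rw [Measure.map_apply hYm measurableSet_Iic]
  exact (ENNReal.toReal_eq_toReal_iff' (measure_ne_top _ _) (measure_ne_top _ _)).mp htoReal


abbrev I01 := Set.Icc (0:ℝ) 1

/-- grid points -/
noncomputable def pts (n : ℕ) (i : Fin (n+2)) : I01 :=
  ⟨(i:ℝ)/((n:ℝ)+1), by
    constructor
    · positivity
    · rw [div_le_one (by positivity)]
      have h : (i:ℕ) ≤ n+1 := Nat.lt_succ_iff.mp i.isLt
      exact_mod_cast h⟩

lemma pts_injective (n : ℕ) : Function.Injective (pts n) := by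
  intro i j hij
  have : (i:ℝ)/((n:ℝ)+1) = (j:ℝ)/((n:ℝ)+1) := congrArg Subtype.val hij
  have h2 : (i:ℝ) = (j:ℝ) := by
    field_simp at this
    exact_mod_cast this
  ext
  exact_mod_cast h2

/-- index of the grid interval containing t -/
noncomputable def idx (n : ℕ) (t : I01) : Fin (n+2) :=
  ⟨(⌊((n:ℝ)+1) * (t:ℝ)⌋).toNat, by
    have ht0 : (0:ℝ) ≤ (t:ℝ) := t.2.1
    have ht1 : (t:ℝ) ≤ 1 := t.2.2
    have hb : ((n:ℝ)+1) * (t:ℝ) ≤ (n:ℝ)+1 := by nlinarith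
    have hfl : ⌊((n:ℝ)+1) * (t:ℝ)⌋ ≤ (n:ℤ)+1 := by
      calc ⌊((n:ℝ)+1) * (t:ℝ)⌋ ≤ ⌊((n:ℝ)+1)⌋ := Int.floor_mono hb
        _ = (n:ℤ)+1 := by
          rw [show ((n:ℝ)+1) = (((n:ℤ)+1 : ℤ) : ℝ) by push_cast; ring, Int.floor_intCast]
    have : (⌊((n:ℝ)+1) * (t:ℝ)⌋).toNat ≤ n+1 := by
      omega
    omega⟩

noncomputable def fap (n : ℕ) (t : I01) : I01 := pts n (idx n t)

lemma fap_dist (n : ℕ) (t : I01) : |((fap n t : I01) : ℝ) - (t:ℝ)| ≤ 1/((n:ℝ)+1) := by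
  have ht0 : (0:ℝ) ≤ (t:ℝ) := t.2.1
  have hy0 : (0:ℝ) ≤ ((n:ℝ)+1) * (t:ℝ) := by positivity
  have hfl0 : (0:ℤ) ≤ ⌊((n:ℝ)+1) * (t:ℝ)⌋ := Int.floor_nonneg.mpr hy0
  have hcast : ((⌊((n:ℝ)+1) * (t:ℝ)⌋.toNat : ℕ) : ℝ) = ((⌊((n:ℝ)+1) * (t:ℝ)⌋ : ℤ) : ℝ) := by
    exact_mod_cast congrArg (Int.cast : ℤ → ℝ) (Int.toNat_of_nonneg hfl0)
  have hval : ((fap n t : I01) : ℝ) = ((⌊((n:ℝ)+1) * (t:ℝ)⌋.toNat : ℕ) : ℝ)/((n:ℝ)+1) := rfl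
  have h1 : (⌊((n:ℝ)+1) * (t:ℝ)⌋ : ℝ) ≤ ((n:ℝ)+1) * (t:ℝ) := Int.floor_le _
  have h2 : ((n:ℝ)+1) * (t:ℝ) - 1 < (⌊((n:ℝ)+1) * (t:ℝ)⌋ : ℝ) := by
    have := Int.lt_floor_add_one (((n:ℝ)+1) * (t:ℝ))
    linarith
  have hn1 : (0:ℝ) < (n:ℝ)+1 := by positivity
  rw [hval, hcast]
  have key : ((⌊((n:ℝ)+1) * (t:ℝ)⌋ : ℤ) : ℝ)/((n:ℝ)+1) - (t:ℝ)
      = (((⌊((n:ℝ)+1) * (t:ℝ)⌋ : ℤ) : ℝ) - ((n:ℝ)+1) * (t:ℝ))/((n:ℝ)+1) := by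
    field_simp
  rw [key, abs_div, abs_of_pos hn1]
  gcongr
  rw [abs_le]
  constructor <;> linarith

lemma fap_measurable (n : ℕ) : Measurable (fap n) := by
  apply Measurable.subtype_mk
  have h1 : Measurable fun t : I01 => ((n:ℝ)+1) * (t:ℝ) :=
    measurable_const.mul measurable_subtype_coe
  have h2 : Measurable fun t : I01 => ⌊((n:ℝ)+1) * (t:ℝ)⌋ := h1.floor
  have h3 : Measurable fun t : I01 => (⌊((n:ℝ)+1) * (t:ℝ)⌋.toNat : ℕ) :=
    (measurable_from_top (f := Int.toNat)).comp h2
  exact (measurable_from_top (f := fun k : ℕ => ((k:ℝ)/((n:ℝ)+1) : ℝ))).comp h3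

lemma fap_tendsto (t : I01) : Tendsto (fun n => fap n t) atTop (𝓝 t) := by
  rw [tendsto_iff_dist_tendsto_zero]
  have hbound : ∀ n : ℕ, dist (fap n t) t ≤ 1/((n:ℝ)+1) := by
    intro n
    rw [Subtype.dist_eq, Real.dist_eq]
    exact fap_dist n t
  apply squeeze_zero (fun n => dist_nonneg) hbound
  exact tendsto_one_div_add_atTop_nhds_zero_nat

lemma cm_integrable (x : C(I01, ℝ)) (μ : Measure I01) [IsFiniteMeasure μ] :
    Integrable (fun t => x t) μ := by
  refine ⟨(x.continuous.measurable).aestronglyMeasurable, ?_⟩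
  apply HasFiniteIntegral.of_bounded (C := ‖x‖)
  filter_upwards with t
  exact x.norm_coe_le_norm t

/-- integral of composed step approximation as a finite sum -/
lemma integral_fap (n : ℕ) (x : C(I01, ℝ)) (μ : Measure I01) [IsFiniteMeasure μ] :
    ∫ t, x (fap n t) ∂μ
      = ∑ i : Fin (n+2), (μ (fap n ⁻¹' {pts n i})).toReal * x (pts n i) := by
  have hrep : (fun t => x (fap n t))
      = fun t => ∑ i : Fin (n+2),
          (fap n ⁻¹' {pts n i}).indicator (fun _ => x (pts n i)) t := by
    funext t
    rw [Finset.sum_eq_single_of_mem (idx n t) (Finset.mem_univ _)]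
    · have : t ∈ fap n ⁻¹' {pts n (idx n t)} := by
        simp only [mem_preimage, mem_singleton_iff]
        rfl
      rw [Set.indicator_of_mem this]
      rfl
    · intro i _ hi
      apply Set.indicator_of_notMem
      simp only [mem_preimage, mem_singleton_iff]
      intro hc
      exact hi (pts_injective n (by rw [← hc]; rfl)).symm
  rw [hrep, integral_finset_sum]
  · congr 1
    funext i
    rw [integral_indicator_const _ ((fap_measurable n) (measurableSet_singleton _))]
    rw [smul_eq_mul]
    rfl
  · intro i _
    apply Integrable.indicator _ ((fap_measurable n) (measurableSet_singleton _))
    exact integrable_const _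

lemma tendsto_integral_fap (x : C(I01, ℝ)) (μ : Measure I01) [IsFiniteMeasure μ] :
    Tendsto (fun n => ∫ t, x (fap n t) ∂μ) atTop (𝓝 (∫ t, x t ∂μ)) := by
  apply tendsto_integral_of_dominated_convergence (fun _ => ‖x‖)
  · intro n
    exact (x.continuous.measurable.comp (fap_measurable n)).aestronglyMeasurable
  · exact integrable_const _
  · intro n
    filter_upwards with t
    exact x.norm_coe_le_norm _
  · filter_upwards with t
    exact (x.continuous.continuousAt.tendsto).comp (fap_tendsto t)


end GaussAux

/-- If `ζ` is a Gaussian process on `[0,1]` with continuous sample paths and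
the induced map `ω ↦ ζ(ω,·)` is measurable into `C([0,1],ℝ)`, then for every finite signed
Borel measure `η` on `[0,1]`, the random variable `ω ↦ ∫ ζ(ω,t) dη(t)` has a (possibly
degenerate) Gaussian distribution. -/
theorem stmt2 {Ω : Type*} [MeasurableSpace Ω] (P : Measure Ω) [IsProbabilityMeasure P]
    (ζ : Ω → Set.Icc (0:ℝ) 1 → ℝ)
    (hmeas : ∀ t : Set.Icc (0:ℝ) 1, Measurable fun ω => ζ ω t)
    (hcont : ∀ ω, Continuous (ζ ω))
    (hζmeas : Measurable fun ω => (⟨ζ ω, hcont ω⟩ : C(Set.Icc (0:ℝ) 1, ℝ)))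
    (hgauss : ∀ (k : ℕ) (t : Fin k → Set.Icc (0:ℝ) 1) (c : Fin k → ℝ),
      ∃ (m : ℝ) (v : ℝ≥0),
        P.map (fun ω => ∑ i, c i * ζ ω (t i)) = gaussianReal m v) :
    ∀ η : SignedMeasure (Set.Icc (0:ℝ) 1),
      ∃ (m : ℝ) (v : ℝ≥0),
        P.map (fun ω => sintegral η (ζ ω)) = gaussianReal m v := by
  intro η
  classical
  haveI hfp : IsFiniteMeasure η.toJordanDecomposition.posPart :=
    η.toJordanDecomposition.posPart_finite
  haveI hfn : IsFiniteMeasure η.toJordanDecomposition.negPart :=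
    η.toJordanDecomposition.negPart_finite
  set μp := η.toJordanDecomposition.posPart with hμp_def
  set μn := η.toJordanDecomposition.negPart with hμn_def
  set cm : Ω → C(Set.Icc (0:ℝ) 1, ℝ) := fun ω => ⟨ζ ω, hcont ω⟩ with hcm_def
  set Y : Ω → ℝ := fun ω => sintegral η (ζ ω) with hY_def
  -- continuity of the integration functional
  have hint_bound : ∀ (μ : Measure (Set.Icc (0:ℝ) 1)), IsFiniteMeasure μ →
      ∀ x y : C(Set.Icc (0:ℝ) 1, ℝ),
      |(∫ t, x t ∂μ) - ∫ t, y t ∂μ| ≤ dist x y * (μ Set.univ).toReal := by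
    intro μ hμ x y
    rw [← integral_sub (GaussAux.cm_integrable x μ) (GaussAux.cm_integrable y μ)]
    calc |∫ t, (x t - y t) ∂μ| = ‖∫ t, (x t - y t) ∂μ‖ := (Real.norm_eq_abs _).symm
      _ ≤ dist x y * (μ Set.univ).toReal := by
          apply norm_integral_le_of_norm_le_const
          filter_upwards with t
          rw [Real.norm_eq_abs, ← Real.dist_eq]
          exact ContinuousMap.dist_apply_le_dist t
  have hLcont : Continuous (fun x : C(Set.Icc (0:ℝ) 1, ℝ) =>
      (∫ t, x t ∂μp) - ∫ t, x t ∂μn) := by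
    set K : ℝ≥0 := ((μp Set.univ).toReal + (μn Set.univ).toReal).toNNReal with hK_def
    apply LipschitzWith.continuous (K := K)
    apply LipschitzWith.of_dist_le_mul
    intro x y
    have h1 := hint_bound μp inferInstance x y
    have h2 := hint_bound μn inferInstance x y
    have hKcoe : (K : ℝ) = (μp Set.univ).toReal + (μn Set.univ).toReal := by
      rw [hK_def, Real.coe_toNNReal]
      positivity
    rw [Real.dist_eq, hKcoe]
    have habs : |((∫ t, x t ∂μp) - ∫ t, x t ∂μn) - ((∫ t, y t ∂μp) - ∫ t, y t ∂μn)|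
        ≤ |(∫ t, x t ∂μp) - ∫ t, y t ∂μp| + |(∫ t, x t ∂μn) - ∫ t, y t ∂μn| := by
      have := abs_sub (((∫ t, x t ∂μp) - ∫ t, y t ∂μp)) (((∫ t, x t ∂μn) - ∫ t, y t ∂μn))
      calc |((∫ t, x t ∂μp) - ∫ t, x t ∂μn) - ((∫ t, y t ∂μp) - ∫ t, y t ∂μn)|
          = |((∫ t, x t ∂μp) - ∫ t, y t ∂μp) - ((∫ t, x t ∂μn) - ∫ t, y t ∂μn)| := by
            ring_nf
        _ ≤ _ := abs_sub _ _
    calc |((∫ t, x t ∂μp) - ∫ t, x t ∂μn) - ((∫ t, y t ∂μp) - ∫ t, y t ∂μn)|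
        ≤ |(∫ t, x t ∂μp) - ∫ t, y t ∂μp| + |(∫ t, x t ∂μn) - ∫ t, y t ∂μn| := habs
      _ ≤ dist x y * (μp Set.univ).toReal + dist x y * (μn Set.univ).toReal :=
          add_le_add h1 h2
      _ = ((μp Set.univ).toReal + (μn Set.univ).toReal) * dist x y := by ring
  have hYm : Measurable Y := by
    have hYeq : Y = (fun x : C(Set.Icc (0:ℝ) 1, ℝ) =>
        (∫ t, x t ∂μp) - ∫ t, x t ∂μn) ∘ cm := rfl
    rw [hYeq]
    exact hLcont.measurable.comp hζmeas
  -- approximating linear combinations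
  set A : ∀ n : ℕ, Fin (n+2) → Set (Set.Icc (0:ℝ) 1) :=
    fun n i => GaussAux.fap n ⁻¹' {GaussAux.pts n i} with hA_def
  set c : ∀ n : ℕ, Fin (n+2) → ℝ :=
    fun n i => (μp (A n i)).toReal - (μn (A n i)).toReal with hc_def
  set X : ℕ → Ω → ℝ := fun n ω => ∑ i, c n i * ζ ω (GaussAux.pts n i) with hX_def
  have hXm : ∀ n, Measurable (X n) := fun n =>
    Finset.measurable_sum _ (fun i _ => (hmeas (GaussAux.pts n i)).const_mul _)
  have hgs : ∀ n, ∃ (m : ℝ) (v : ℝ≥0), P.map (X n) = gaussianReal m v :=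
    fun n => hgauss (n+2) (GaussAux.pts n) (c n)
  choose ms vs hglaw using hgs
  have hconv : ∀ ω, Filter.Tendsto (fun n => X n ω) Filter.atTop (nhds (Y ω)) := by
    intro ω
    have hXrw : ∀ n, X n ω
        = (∫ t, (cm ω) (GaussAux.fap n t) ∂μp) - ∫ t, (cm ω) (GaussAux.fap n t) ∂μn := by
      intro n
      rw [GaussAux.integral_fap, GaussAux.integral_fap, ← Finset.sum_sub_distrib]
      exact Finset.sum_congr rfl (fun i _ => by rw [← sub_mul]; rfl)
    have hYrw : Y ω = (∫ t, (cm ω) t ∂μp) - ∫ t, (cm ω) t ∂μn := rfl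
    rw [funext hXrw, hYrw]
    exact (GaussAux.tendsto_integral_fap (cm ω) μp).sub
      (GaussAux.tendsto_integral_fap (cm ω) μn)
  exact GaussAux.gaussian_limit P X Y hXm hYm (Filter.Eventually.of_forall hconv) ms vs hglaw
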